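/- arXiv:2106.02391 — 6 statements merged into one kernel-verified Lean document; each statement's English description precedes it below -/
import Mathlib

section
/- For real matrices A ∈ ℝ^{n×n}, B ∈ ℝ^{n×m}, and F ∈ ℝ^{m×n}, the spectral radius of A + B·F equals the spectral radius of the block matrix A_F := [[A, B], [F·A, F·B]] ∈ ℝ^{(n+m)×(n+m)}. -/
open Matrix

/-- The spectral radius of a real square matrix: the supremum of the moduli of the
elements of the spectrum of the matrix regarded as a complex matrix. -/
noncomputable def specRad {N : Type*} [Fintype N] [DecidableEq N] (M : Matrix N N ℝ) : ℝ :=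
  sSup ((fun z : ℂ => ‖z‖) '' spectrum ℂ (M.map Complex.ofReal))

lemma mem_spectrum_iff_det {k : Type*} [Fintype k] [DecidableEq k]
    (M : Matrix k k ℂ) (z : ℂ) :
    z ∈ spectrum ℂ M ↔ (z • (1 : Matrix k k ℂ) - M).det = 0 := by
  rw [spectrum.mem_iff, Algebra.algebraMap_eq_smul_one, Matrix.isUnit_iff_isUnit_det,
    isUnit_iff_ne_zero, not_not]

lemma det_aug {n m : ℕ} (A : Matrix (Fin n) (Fin n) ℂ) (B : Matrix (Fin n) (Fin m) ℂ)
    (F : Matrix (Fin m) (Fin n) ℂ) (z : ℂ) :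
    (z • (1 : Matrix (Fin n ⊕ Fin m) (Fin n ⊕ Fin m) ℂ) - fromBlocks A B (F * A) (F * B)).det
      = (z • (1 : Matrix (Fin n) (Fin n) ℂ) - (A + B * F)).det * z ^ m := by
  have key : fromBlocks (1 : Matrix (Fin n) (Fin n) ℂ) 0 F 1
      * fromBlocks (z • (1 : Matrix (Fin n) (Fin n) ℂ) - (A + B * F)) (-B) 0
          (z • (1 : Matrix (Fin m) (Fin m) ℂ))
      * fromBlocks (1 : Matrix (Fin n) (Fin n) ℂ) 0 (-F) 1
      = z • (1 : Matrix (Fin n ⊕ Fin m) (Fin n ⊕ Fin m) ℂ) - fromBlocks A B (F * A) (F * B) := by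
    have hsub : z • (1 : Matrix (Fin n ⊕ Fin m) (Fin n ⊕ Fin m) ℂ) - fromBlocks A B (F * A) (F * B)
        = fromBlocks (z • 1 - A) (0 - B) (0 - F * A) (z • 1 - F * B) := by
      rw [← fromBlocks_one (l := Fin n) (m := Fin m), fromBlocks_smul]
      ext (i | i) (j | j) <;> simp [fromBlocks]
    rw [hsub, fromBlocks_multiply, fromBlocks_multiply, fromBlocks_inj]
    refine ⟨?_, ?_, ?_, ?_⟩ <;>
      simp [Matrix.mul_sub, Matrix.sub_mul, Matrix.mul_add, Matrix.add_mul, Matrix.mul_smul,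
        Matrix.smul_mul, Matrix.mul_assoc] <;> abel
  rw [← key, det_mul, det_mul, det_fromBlocks_zero₁₂, det_fromBlocks_zero₁₂, det_one, det_one,
    one_mul, mul_one, det_fromBlocks_zero₂₁]
  have : (z • (1 : Matrix (Fin m) (Fin m) ℂ)).det = z ^ m := by
    rw [det_smul, det_one, mul_one, Fintype.card_fin]
  rw [this]
  ring

lemma spectrum_aug {n m : ℕ} (A : Matrix (Fin n) (Fin n) ℂ) (B : Matrix (Fin n) (Fin m) ℂ)
    (F : Matrix (Fin m) (Fin n) ℂ) (z : ℂ) :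
    z ∈ spectrum ℂ (fromBlocks A B (F * A) (F * B)) ↔
      z ∈ spectrum ℂ (A + B * F) ∨ (z = 0 ∧ m ≠ 0) := by
  rw [mem_spectrum_iff_det, mem_spectrum_iff_det, det_aug, mul_eq_zero, pow_eq_zero_iff']

/-- The spectral radius of `A + B·F` equals that of the block matrix
`A_F = [[A, B], [F·A, F·B]]`. -/
theorem spectral_radius_eq_of_augmented {n m : ℕ}
    (A : Matrix (Fin n) (Fin n) ℝ) (B : Matrix (Fin n) (Fin m) ℝ)
    (F : Matrix (Fin m) (Fin n) ℝ) :
    specRad (A + B * F) = specRad (Matrix.fromBlocks A B (F * A) (F * B)) := by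
  classical
  set A' := A.map Complex.ofReal
  set B' := B.map Complex.ofReal
  set F' := F.map Complex.ofReal
  have hmap1 : (A + B * F).map Complex.ofReal = A' + B' * F' := by
    ext i j
    simp [A', B', F', Matrix.add_apply, Matrix.mul_apply, Matrix.map_apply]
  have hmap2 : (Matrix.fromBlocks A B (F * A) (F * B)).map Complex.ofReal
      = fromBlocks A' B' (F' * A') (F' * B') := by
    ext (i | i) (j | j) <;>
      simp [A', B', F', Matrix.fromBlocks, Matrix.mul_apply, Matrix.map_apply]
  unfold specRad
  rw [hmap1, hmap2]
  set S := spectrum ℂ (A' + B' * F') with hS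
  have hT : spectrum ℂ (fromBlocks A' B' (F' * A') (F' * B'))
      = S ∪ {z | z = 0 ∧ m ≠ 0} := by
    ext z
    simp [spectrum_aug, hS, Set.mem_union]
  rw [hT]
  rcases Nat.eq_zero_or_pos m with hm | hm
  · simp [hm]
  · have hm' : m ≠ 0 := hm.ne'
    have hset : S ∪ {z | z = 0 ∧ m ≠ 0} = S ∪ {0} := by
      ext z; simp [hm']
    rw [hset, Set.image_union, Set.image_singleton]
    simp only [norm_zero]
    rcases Nat.eq_zero_or_pos n with hn | hn
    · have hSempty : S = ∅ := by
        ext z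
        rw [hS, mem_spectrum_iff_det]
        have : IsEmpty (Fin n) := by rw [hn]; exact Fin.isEmpty'
        simp [Matrix.det_isEmpty]
      rw [hSempty]
      simp [Real.sSup_empty, csSup_singleton]
    · have : Nonempty (Fin n) := Fin.pos_iff_nonempty.mp hn
      have hne : S.Nonempty := spectrum.nonempty_of_isAlgClosed_of_finiteDimensional ℂ _
      have hfin : S.Finite := Matrix.finite_spectrum _
      have hTne : ((fun z : ℂ => ‖z‖) '' S).Nonempty := hne.image _
      have hTbdd : BddAbove ((fun z : ℂ => ‖z‖) '' S) := (hfin.image _).bddAbove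
      rw [csSup_union hTbdd hTne (bddAbove_singleton) (Set.singleton_nonempty 0),
        csSup_singleton]
      obtain ⟨a, ha⟩ := hne
      have h0 : (0 : ℝ) ≤ sSup ((fun z : ℂ => ‖z‖) '' S) :=
        le_trans (norm_nonneg a) (le_csSup hTbdd ⟨a, ha, rfl⟩)
      exact (max_eq_left h0).symm
end

section
/- Let Q ∈ ℝ^{n×n} be symmetric and R ∈ ℝ^{m×n} with rank(R) < n. Then the following are equivalent: (1) xᵀ·Q·x < 0 for every nonzero x ∈ ℝ^n with R·x = 0; (2) there exists M ∈ ℝ^{n×m} such that Q + M·R + Rᵀ·Mᵀ is negative definite. -/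
open Matrix

private lemma quad_scale {n : ℕ} (A : Matrix (Fin n) (Fin n) ℝ)
    (h : ∀ y : Fin n → ℝ, ‖y‖ = 1 → y ⬝ᵥ A.mulVec y < 0) :
    ∀ x : Fin n → ℝ, x ≠ 0 → x ⬝ᵥ A.mulVec x < 0 := by
  intro x hx
  have hc : (0 : ℝ) < ‖x‖ := norm_pos_iff.2 hx
  set y : Fin n → ℝ := ‖x‖⁻¹ • x with hy
  have hyn : ‖y‖ = 1 := by
    rw [hy, norm_smul, norm_inv, norm_norm, inv_mul_cancel₀ hc.ne']
  have hxy : x = ‖x‖ • y := by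
    rw [hy, smul_smul, mul_inv_cancel₀ hc.ne', one_smul]
  have hlt := h y hyn
  rw [hxy]
  have : (‖x‖ • y) ⬝ᵥ A.mulVec (‖x‖ • y) = ‖x‖ * (‖x‖ * (y ⬝ᵥ A.mulVec y)) := by
    rw [mulVec_smul, smul_dotProduct, dotProduct_smul]
    simp [smul_eq_mul]
  rw [this]
  have h2 : (0:ℝ) < ‖x‖ * ‖x‖ := mul_pos hc hc
  nlinarith

/-- Finsler's lemma: for symmetric `Q` and `R` with `rank R < n`, the quadratic form
`xᵀQx` is negative on the nonzero kernel of `R` iff there is `M` such that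
`Q + M·R + Rᵀ·Mᵀ` is negative definite. -/
theorem finsler_lemma {n m : ℕ}
    (Q : Matrix (Fin n) (Fin n) ℝ) (hQ : Q.IsSymm)
    (R : Matrix (Fin m) (Fin n) ℝ) (hR : R.rank < n) :
    (∀ x : Fin n → ℝ, x ≠ 0 → R.mulVec x = 0 → x ⬝ᵥ Q.mulVec x < 0) ↔
      ∃ M : Matrix (Fin n) (Fin m) ℝ, (-(Q + M * R + Rᵀ * Mᵀ)).PosDef := by
  -- abbreviations
  set q : (Fin n → ℝ) → ℝ := fun x => x ⬝ᵥ Q.mulVec x with hqdef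
  set r : (Fin n → ℝ) → ℝ := fun x => (R.mulVec x) ⬝ᵥ (R.mulVec x) with hrdef
  have hr0 : ∀ x, 0 ≤ r x := by
    intro x
    exact Finset.sum_nonneg fun i _ => mul_self_nonneg _
  have hqc : Continuous q :=
    continuous_id.dotProduct (continuous_const.matrix_mulVec continuous_id)
  have hrc : Continuous r :=
    (continuous_const.matrix_mulVec continuous_id).dotProduct
      (continuous_const.matrix_mulVec continuous_id)
  have key : ∀ x : Fin n → ℝ, x ⬝ᵥ (Rᵀ * R).mulVec x = r x := by
    intro x
    rw [← mulVec_mulVec, dotProduct_mulVec, vecMul_transpose, hrdef]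
  constructor
  · intro h
    -- nested compact sets
    set K : ℕ → Set (Fin n → ℝ) :=
      fun k => Metric.sphere (0 : Fin n → ℝ) 1 ∩ {x | 2 * (k : ℝ) * r x ≤ q x} with hK
    have hKclosed : ∀ k, IsClosed (K k) :=
      fun k => Metric.isClosed_sphere.inter
        (isClosed_le ((continuous_const.mul hrc)) hqc)
    have hKsub : ∀ k, K (k + 1) ⊆ K k := by
      intro k x ⟨hx1, hx2⟩
      refine ⟨hx1, ?_⟩
      have : 2 * (k : ℝ) * r x ≤ 2 * ((k : ℝ) + 1) * r x := by
        have := hr0 x; nlinarith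
      simp only [Set.mem_setOf_eq] at hx2 ⊢
      push_cast at hx2 ⊢
      linarith
    -- there is k with K k empty
    have hempty : ∃ k : ℕ, K k = ∅ := by
      by_contra hcon
      push_neg at hcon
      have hne : ∀ k, (K k).Nonempty := hcon
      have hcpt : IsCompact (K 0) :=
        (isCompact_sphere 0 1).of_isClosed_subset (hKclosed 0) Set.inter_subset_left
      obtain ⟨x, hx⟩ := IsCompact.nonempty_iInter_of_sequence_nonempty_isCompact_isClosed
        K hKsub hne hcpt hKclosed
      simp only [Set.mem_iInter] at hx
      have hxs : ‖x‖ = 1 := by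
        have := (hx 0).1
        simpa [Metric.mem_sphere, dist_zero_right] using this
      have hxne : x ≠ 0 := by
        intro h0; rw [h0] at hxs; simp at hxs
      have hall : ∀ k : ℕ, 2 * (k : ℝ) * r x ≤ q x := fun k => (hx k).2
      have hrx : r x = 0 := by
        by_contra hr
        have hrpos : 0 < r x := lt_of_le_of_ne (hr0 x) (Ne.symm hr)
        obtain ⟨k, hk⟩ := exists_nat_gt (q x / (2 * r x))
        have := hall k
        have h2r : 0 < 2 * r x := by linarith
        rw [div_lt_iff₀ h2r] at hk
        nlinarith
      have hRx : R.mulVec x = 0 := dotProduct_self_eq_zero.1 hrx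
      have hq0 : q x < 0 := h x hxne hRx
      have := hall 0
      simp at this
      linarith
    obtain ⟨k, hk⟩ := hempty
    -- M = -k • Rᵀ
    refine ⟨(-(k : ℝ)) • Rᵀ, ?_⟩
    have hsum : ∀ x : Fin n → ℝ,
        x ⬝ᵥ (Q + ((-(k : ℝ)) • Rᵀ) * R + Rᵀ * ((-(k : ℝ)) • Rᵀ)ᵀ).mulVec x
          = q x - 2 * (k : ℝ) * r x := by
      intro x
      have ht : ((-(k : ℝ)) • Rᵀ)ᵀ = (-(k : ℝ)) • R := by
        rw [transpose_smul, transpose_transpose]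
      rw [ht, Matrix.smul_mul, Matrix.mul_smul]
      simp only [add_mulVec, dotProduct_add, Matrix.smul_mulVec, dotProduct_smul, key x]
      simp only [smul_eq_mul, hqdef]
      ring
    have hneg : ∀ x : Fin n → ℝ, x ≠ 0 →
        x ⬝ᵥ (Q + ((-(k : ℝ)) • Rᵀ) * R + Rᵀ * ((-(k : ℝ)) • Rᵀ)ᵀ).mulVec x < 0 := by
      apply quad_scale
      intro y hy
      rw [hsum y]
      have : y ∉ K k := by rw [hk]; exact Set.notMem_empty y
      simp only [hK, Set.mem_inter_iff, Metric.mem_sphere, dist_zero_right,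
        Set.mem_setOf_eq, not_and] at this
      have := this hy
      linarith
    refine posDef_iff_dotProduct_mulVec.mpr ⟨?_, ?_⟩
    · -- Hermitian
      show (-(Q + ((-(k : ℝ)) • Rᵀ) * R + Rᵀ * ((-(k : ℝ)) • Rᵀ)ᵀ))ᴴ = _
      have ht : ((-(k : ℝ)) • Rᵀ)ᵀ = (-(k : ℝ)) • R := by
        rw [transpose_smul, transpose_transpose]
      show (-(Q + ((-(k : ℝ)) • Rᵀ) * R + Rᵀ * ((-(k : ℝ)) • Rᵀ)ᵀ))ᵀ.map star = _
      have hst : ∀ (A : Matrix (Fin n) (Fin n) ℝ), A.map star = A := by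
        intro A; ext i j; simp
      rw [hst]
      simp only [ht, transpose_neg, transpose_add, transpose_mul, transpose_smul,
        transpose_transpose, hQ.eq, Matrix.smul_mul, Matrix.mul_smul]
    · intro x hx
      have := hneg x hx
      have hsx : star x = x := by ext i; simp
      rw [hsx, neg_mulVec, dotProduct_neg]
      linarith
  · rintro ⟨M, hM⟩ x hx hRx
    have hpos := (posDef_iff_dotProduct_mulVec.mp hM).2 hx
    have hsx : star x = x := by ext i; simp
    rw [hsx, neg_mulVec, dotProduct_neg] at hpos
    have hlt : x ⬝ᵥ (Q + M * R + Rᵀ * Mᵀ).mulVec x < 0 := by linarith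
    rw [add_mulVec, add_mulVec, dotProduct_add, dotProduct_add] at hlt
    have h1 : x ⬝ᵥ (M * R).mulVec x = 0 := by
      rw [← mulVec_mulVec, hRx, mulVec_zero, dotProduct_zero]
    have h2 : x ⬝ᵥ (Rᵀ * Mᵀ).mulVec x = 0 := by
      rw [← mulVec_mulVec, dotProduct_mulVec, vecMul_transpose, hRx, zero_dotProduct]
    rw [h1, h2] at hlt
    simpa using hlt
end

section
/- Let A ∈ ℝ^{n×n}, B ∈ ℝ^{n×m}, F ∈ ℝ^{m×n}, and A_F := [[A, B], [F·A, F·B]]. For i = 1,…,r let x(·;i) : ℕ → ℝ^n and u(·;i) : ℕ → ℝ^m satisfy u(k;i) = F·x(k;i) and x(k+1;i) = A·x(k;i) + B·u(k;i) for all k ∈ ℕ. Set v(k;i) := (x(k;i), u(k;i)) ∈ ℝ^{n+m}, S := (1/(r·N))·Σ_{i=1}^{r} Σ_{k=0}^{N−1} v(k;i)·v(k;i)ᵀ, and H := (1/(r·N))·Σ_{i=1}^{r} Σ_{k=0}^{N−1} v(k;i)·v(k+1;i)ᵀ. Then S·A_Fᵀ = H. -/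
open Matrix

lemma vecMulVec_mul {p q s : Type*} [Fintype q] (v : p → ℝ) (w : q → ℝ)
    (M : Matrix q s ℝ) : Matrix.vecMulVec v w * M = Matrix.vecMulVec v (Matrix.vecMul w M) := by
  ext i j
  simp [Matrix.vecMulVec, Matrix.mul_apply, Matrix.vecMul, dotProduct,
    Finset.mul_sum, mul_assoc]

/-- On-policy data matrix transformation: `S(F) · A_Fᵀ = H(F)`. -/
theorem data_matrix_transformation_on_policy {n m : ℕ} (r N : ℕ) (hr : 1 ≤ r) (hN : 1 ≤ N)
    (A : Matrix (Fin n) (Fin n) ℝ) (B : Matrix (Fin n) (Fin m) ℝ)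
    (F : Matrix (Fin m) (Fin n) ℝ)
    (x : Fin r → ℕ → Fin n → ℝ) (u : Fin r → ℕ → Fin m → ℝ)
    (hu : ∀ i k, u i k = F.mulVec (x i k))
    (hx : ∀ i k, x i (k + 1) = A.mulVec (x i k) + B.mulVec (u i k)) :
    ((1 / ((r : ℝ) * (N : ℝ))) • ∑ i : Fin r, ∑ k ∈ Finset.range N,
        Matrix.vecMulVec (Sum.elim (x i k) (u i k)) (Sum.elim (x i k) (u i k))) *
      (Matrix.fromBlocks A B (F * A) (F * B))ᵀ =
    (1 / ((r : ℝ) * (N : ℝ))) • ∑ i : Fin r, ∑ k ∈ Finset.range N,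
        Matrix.vecMulVec (Sum.elim (x i k) (u i k))
          (Sum.elim (x i (k + 1)) (u i (k + 1))) := by
  rw [Matrix.smul_mul, Finset.sum_mul]
  congr 1
  refine Finset.sum_congr rfl fun i _ => ?_
  rw [Finset.sum_mul]
  refine Finset.sum_congr rfl fun k _ => ?_
  rw [_root_.vecMulVec_mul, Matrix.vecMul_transpose, Matrix.fromBlocks_mulVec]
  have hv : (Sum.elim (A.mulVec (x i k) + B.mulVec (u i k))
      ((F * A).mulVec (x i k) + (F * B).mulVec (u i k)) : Fin n ⊕ Fin m → ℝ)
      = Sum.elim (x i (k + 1)) (u i (k + 1)) := by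
    funext j
    cases j with
    | inl j =>
        simp [hx i k]
    | inr j =>
        have h1 : u i (k + 1) = F.mulVec (A.mulVec (x i k) + B.mulVec (u i k)) := by
          rw [hu i (k + 1), hx i k]
        simp [h1, Matrix.mulVec_add, Matrix.mulVec_mulVec]
  simp only [Sum.elim_comp_inl, Sum.elim_comp_inr] at *
  rw [hv]
end

section
/- Let A ∈ ℝ^{n×n}, B ∈ ℝ^{n×m}, let S ∈ ℝ^{(n+m)×(n+m)} be symmetric positive definite, and set H := S·Tᵀ where T := [A B] ∈ ℝ^{n×(n+m)}. Suppose G ∈ ℝ^{n×n}, symmetric P ∈ ℝ^{(n+m)×(n+m)}, and X ∈ ℝ^{n×m} satisfy that the block matrix [[−S·P·S, [G X]ᵀ], [[G X], Hᵀ·P·H − G − Gᵀ]] is negative definite. Then S·P·S is positive definite, G is invertible, and F := Xᵀ·(Gᵀ)⁻¹ satisfies ρ(A + B·F) < 1 and A_F·(S·P·S)·A_Fᵀ ≺ S·P·S, where A_F := [[A, B], [F·A, F·B]]. -/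
open Matrix ComplexOrder

section Aux

variable {k l : Type*} [Fintype k] [Fintype l]

lemma posDef_conj_of_inj {M : Matrix k k ℝ} (hM : M.PosDef) (J : Matrix k l ℝ)
    (hJ : ∀ v : l → ℝ, J *ᵥ v = 0 → v = 0) : (Jᵀ * M * J).PosDef := by
  refine Matrix.PosDef.of_dotProduct_mulVec_pos ?_ ?_
  · show (Jᵀ * M * J)ᴴ = Jᵀ * M * J
    rw [conjTranspose_mul, conjTranspose_mul, hM.1.eq,
      conjTranspose_eq_transpose_of_trivial, conjTranspose_eq_transpose_of_trivial,
      transpose_transpose, Matrix.mul_assoc]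
  · intro x hx
    have hJx : J *ᵥ x ≠ 0 := fun h0 => hx (hJ x h0)
    have h := hM.dotProduct_mulVec_pos hJx
    simp only [star_trivial] at h ⊢
    rwa [← Matrix.mulVec_mulVec, ← Matrix.mulVec_mulVec, dotProduct_mulVec,
      vecMul_transpose]

lemma dot_mulVec_symm {Q : Matrix k k ℝ} (hQsymm : Qᵀ = Q) (a b : k → ℝ) :
    a ⬝ᵥ (Q *ᵥ b) = b ⬝ᵥ (Q *ᵥ a) := by
  conv_lhs => rw [← hQsymm, mulVec_transpose]
  rw [dotProduct_mulVec, dotProduct_comm]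

lemma posDef_map_complex {Q : Matrix k k ℝ} (hQ : Q.PosDef) :
    (Q.map Complex.ofReal).PosDef := by
  have hQsymm : Qᵀ = Q := by
    rw [← conjTranspose_eq_transpose_of_trivial]; exact hQ.1.eq
  have key : ∀ a b : k → ℝ,
      (fun i => ((a i : ℂ))) ⬝ᵥ ((Q.map Complex.ofReal) *ᵥ fun i => ((b i : ℂ)))
        = ((a ⬝ᵥ (Q *ᵥ b) : ℝ) : ℂ) := by
    intro a b
    have h1 : (Q.map Complex.ofReal) *ᵥ (fun i => ((b i : ℂ)))
        = fun i => (((Q *ᵥ b) i : ℝ) : ℂ) := by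
      funext i
      exact (RingHom.map_mulVec Complex.ofRealHom Q b i).symm
    rw [h1]
    simp only [dotProduct]
    push_cast
    rfl
  refine Matrix.PosDef.of_dotProduct_mulVec_pos ?_ ?_
  · exact hQ.1.map Complex.ofReal fun a => (Complex.conj_ofReal a).symm
  · intro v hv
    set x : k → ℝ := fun i => (v i).re with hx
    set y : k → ℝ := fun i => (v i).im with hy
    have hvdec : v = (fun i => ((x i : ℂ))) + Complex.I • (fun i => ((y i : ℂ))) := by
      funext i
      simp only [hx, hy, Pi.add_apply, Pi.smul_apply, smul_eq_mul]
      rw [mul_comm]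
      exact (Complex.re_add_im (v i)).symm
    have hsv : star v = (fun i => ((x i : ℂ))) - Complex.I • (fun i => ((y i : ℂ))) := by
      funext i
      simp only [hx, hy, Pi.star_apply, Pi.sub_apply, Pi.smul_apply, smul_eq_mul]
      apply Complex.ext <;> simp
    have hmain : star v ⬝ᵥ ((Q.map Complex.ofReal) *ᵥ v)
        = ((x ⬝ᵥ (Q *ᵥ x) + y ⬝ᵥ (Q *ᵥ y) : ℝ) : ℂ) := by
      rw [hsv]
      conv_lhs => rw [hvdec]
      simp only [mulVec_add, mulVec_smul, sub_dotProduct, dotProduct_add,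
        smul_dotProduct, dotProduct_smul, smul_eq_mul]
      rw [key, key, key, key, dot_mulVec_symm hQsymm y x]
      push_cast
      linear_combination (-((y ⬝ᵥ (Q *ᵥ y) : ℝ) : ℂ)) * Complex.I_sq
    rw [hmain]
    rw [Complex.zero_lt_real]
    have hxy : x ≠ 0 ∨ y ≠ 0 := by
      by_contra h
      push_neg at h
      apply hv
      rw [hvdec, h.1, h.2]
      funext i; simp
    have hxnn : 0 ≤ x ⬝ᵥ (Q *ᵥ x) := by simpa using hQ.posSemidef.dotProduct_mulVec_nonneg x
    have hynn : 0 ≤ y ⬝ᵥ (Q *ᵥ y) := by simpa using hQ.posSemidef.dotProduct_mulVec_nonneg y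
    rcases hxy with h | h
    · have := hQ.dotProduct_mulVec_pos h; simp only [star_trivial] at this; linarith
    · have := hQ.dotProduct_mulVec_pos h; simp only [star_trivial] at this; linarith

lemma mem_spectrum_iff_exists_mulVec [DecidableEq k] {M : Matrix k k ℂ} {μ : ℂ} :
    μ ∈ spectrum ℂ M ↔ ∃ v, v ≠ 0 ∧ M *ᵥ v = μ • v := by
  have hiff : ∀ v : k → ℂ,
      ((algebraMap ℂ (Matrix k k ℂ) μ - M) *ᵥ v = 0) ↔ (M *ᵥ v = μ • v) := by
    intro v
    rw [sub_mulVec, Algebra.algebraMap_eq_smul_one, smul_mulVec, one_mulVec,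
      sub_eq_zero, eq_comm]
  rw [spectrum.mem_iff, Matrix.isUnit_iff_isUnit_det, isUnit_iff_ne_zero, not_ne_iff,
    ← Matrix.exists_mulVec_eq_zero_iff]
  simp only [hiff, ne_eq]

lemma conj_mem_spectrum_conjTranspose [DecidableEq k] {M : Matrix k k ℂ} {μ : ℂ}
    (h : μ ∈ spectrum ℂ M) : (starRingEnd ℂ) μ ∈ spectrum ℂ Mᴴ := by
  rw [spectrum.mem_iff, Matrix.isUnit_iff_isUnit_det, isUnit_iff_ne_zero, not_ne_iff] at h ⊢
  have heq : algebraMap ℂ (Matrix k k ℂ) ((starRingEnd ℂ) μ) - Mᴴ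
      = (algebraMap ℂ (Matrix k k ℂ) μ - M)ᴴ := by
    rw [conjTranspose_sub, Algebra.algebraMap_eq_smul_one, Algebra.algebraMap_eq_smul_one,
      conjTranspose_smul, conjTranspose_one]
    rfl
  rw [heq, det_conjTranspose, h, star_zero]

lemma mapOfReal_mul {o : Type*} [Fintype l] (R : Matrix k l ℝ) (W : Matrix l o ℝ) :
    (R * W).map Complex.ofReal = R.map Complex.ofReal * W.map Complex.ofReal := by
  have h : (Complex.ofReal : ℝ → ℂ) = ⇑Complex.ofRealHom := funext fun r => rfl
  rw [h, Matrix.map_mul]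

lemma mapOfReal_sub (R W : Matrix k l ℝ) :
    (R - W).map Complex.ofReal = R.map Complex.ofReal - W.map Complex.ofReal :=
  Matrix.map_sub _ (by intro a b; push_cast; ring) _ _

lemma conjTranspose_map_ofReal (R : Matrix k l ℝ) :
    (R.map Complex.ofReal)ᴴ = Rᵀ.map Complex.ofReal := by
  ext i j
  simp [conjTranspose_apply, Complex.conj_ofReal]

end Aux

set_option maxHeartbeats 1000000

/-- If the data-driven stabilization LMI holds, then `S·P·S ≻ 0`, `G` is invertible, and
`F = Xᵀ·(Gᵀ)⁻¹` is a stabilizing gain with Lyapunov certificate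
`A_F·(S·P·S)·A_Fᵀ ≺ S·P·S`. -/
theorem stabilization_LMI_gain {n m : ℕ}
    (A : Matrix (Fin n) (Fin n) ℝ) (B : Matrix (Fin n) (Fin m) ℝ)
    (S : Matrix (Fin n ⊕ Fin m) (Fin n ⊕ Fin m) ℝ) (hS : S.PosDef)
    (H : Matrix (Fin n ⊕ Fin m) (Fin n) ℝ)
    (hH : H = S * (Matrix.fromCols A B)ᵀ)
    (G : Matrix (Fin n) (Fin n) ℝ) (P : Matrix (Fin n ⊕ Fin m) (Fin n ⊕ Fin m) ℝ)
    (X : Matrix (Fin n) (Fin m) ℝ) (hP : P.IsSymm)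
    (hLMI : (-(Matrix.fromBlocks (-(S * P * S)) (Matrix.fromCols G X)ᵀ
        (Matrix.fromCols G X) (Hᵀ * P * H - G - Gᵀ))).PosDef) :
    (S * P * S).PosDef ∧ IsUnit G ∧
      specRad (A + B * (Xᵀ * (Gᵀ)⁻¹)) < 1 ∧
      (S * P * S -
        (Matrix.fromBlocks A B ((Xᵀ * (Gᵀ)⁻¹) * A) ((Xᵀ * (Gᵀ)⁻¹) * B)) * (S * P * S) *
          (Matrix.fromBlocks A B ((Xᵀ * (Gᵀ)⁻¹) * A) ((Xᵀ * (Gᵀ)⁻¹) * B))ᵀ).PosDef := by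
  classical
  set F := Xᵀ * (Gᵀ)⁻¹ with hF
  set T := Matrix.fromCols A B with hT
  set Q := S * P * S with hQdef
  set C := Matrix.fromCols G X with hCdef
  have hSsymm : Sᵀ = S := by
    rw [← conjTranspose_eq_transpose_of_trivial]; exact hS.1.eq
  -- rewrite the LMI matrix
  have hMeq : (-(Matrix.fromBlocks (-Q) Cᵀ C (Hᵀ * P * H - G - Gᵀ)))
      = Matrix.fromBlocks Q (-Cᵀ) (-C) (G + Gᵀ - Hᵀ * P * H) := by
    rw [Matrix.fromBlocks_neg, neg_neg]
    congr 1
    abel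
  rw [hMeq] at hLMI
  -- Q is positive definite
  have hQpos : Q.PosDef := by
    have hinj : ∀ v : (Fin n ⊕ Fin m) → ℝ,
        (fromRows (1 : Matrix (Fin n ⊕ Fin m) (Fin n ⊕ Fin m) ℝ)
          (0 : Matrix (Fin n) (Fin n ⊕ Fin m) ℝ)) *ᵥ v = 0 → v = 0 := by
      intro v hv
      rw [fromRows_mulVec] at hv
      have h1 : (1 : Matrix (Fin n ⊕ Fin m) (Fin n ⊕ Fin m) ℝ) *ᵥ v = 0 :=
        funext fun i => congrFun hv (Sum.inl i)
      rwa [one_mulVec] at h1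
    have h := posDef_conj_of_inj hLMI _ hinj
    have hident : (fromRows (1 : Matrix (Fin n ⊕ Fin m) (Fin n ⊕ Fin m) ℝ)
          (0 : Matrix (Fin n) (Fin n ⊕ Fin m) ℝ))ᵀ *
        (Matrix.fromBlocks Q (-Cᵀ) (-C) (G + Gᵀ - Hᵀ * P * H)) *
        (fromRows (1 : Matrix (Fin n ⊕ Fin m) (Fin n ⊕ Fin m) ℝ)
          (0 : Matrix (Fin n) (Fin n ⊕ Fin m) ℝ)) = Q := by
      rw [transpose_fromRows, Matrix.mul_assoc, fromBlocks_mul_fromRows,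
        fromCols_mul_fromRows]
      simp
    rwa [hident] at h
  -- the lower-right block is positive definite
  have hDpos : (G + Gᵀ - Hᵀ * P * H).PosDef := by
    have hinj : ∀ v : Fin n → ℝ,
        (fromRows (0 : Matrix (Fin n ⊕ Fin m) (Fin n) ℝ)
          (1 : Matrix (Fin n) (Fin n) ℝ)) *ᵥ v = 0 → v = 0 := by
      intro v hv
      rw [fromRows_mulVec] at hv
      have h1 : (1 : Matrix (Fin n) (Fin n) ℝ) *ᵥ v = 0 :=
        funext fun i => congrFun hv (Sum.inr i)
      rwa [one_mulVec] at h1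
    have h := posDef_conj_of_inj hLMI _ hinj
    have hident : (fromRows (0 : Matrix (Fin n ⊕ Fin m) (Fin n) ℝ)
          (1 : Matrix (Fin n) (Fin n) ℝ))ᵀ *
        (Matrix.fromBlocks Q (-Cᵀ) (-C) (G + Gᵀ - Hᵀ * P * H)) *
        (fromRows (0 : Matrix (Fin n ⊕ Fin m) (Fin n) ℝ) (1 : Matrix (Fin n) (Fin n) ℝ)) = G + Gᵀ - Hᵀ * P * H := by
      rw [transpose_fromRows, Matrix.mul_assoc, fromBlocks_mul_fromRows,
        fromCols_mul_fromRows]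
      simp
    rwa [hident] at h
  -- rewrite HᵀPH
  have hW : Hᵀ * P * H = T * Q * Tᵀ := by
    rw [hH, transpose_mul, transpose_transpose, hSsymm, hQdef]
    simp only [Matrix.mul_assoc]
  have hWpsd : (Hᵀ * P * H).PosSemidef := by
    rw [hW]
    have := hQpos.posSemidef.mul_mul_conjTranspose_same T
    rwa [conjTranspose_eq_transpose_of_trivial] at this
  -- G is invertible
  have hGunit : IsUnit G := by
    by_contra hcon
    have hdet : G.det = 0 := by
      rwa [Matrix.isUnit_iff_isUnit_det, isUnit_iff_ne_zero, not_ne_iff] at hcon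
    obtain ⟨x, hx0, hx⟩ := (Matrix.exists_mulVec_eq_zero_iff).mpr hdet
    have h1 := hDpos.dotProduct_mulVec_pos hx0
    have hGx : x ⬝ᵥ (G *ᵥ x) = 0 := by rw [hx, dotProduct_zero]
    have hGtx : x ⬝ᵥ (Gᵀ *ᵥ x) = 0 := by
      rw [dotProduct_mulVec, vecMul_transpose, hx, zero_dotProduct]
    have hWx : 0 ≤ x ⬝ᵥ ((Hᵀ * P * H) *ᵥ x) := by simpa using hWpsd.dotProduct_mulVec_nonneg x
    rw [star_trivial, sub_mulVec, add_mulVec, dotProduct_sub, dotProduct_add,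
      hGx, hGtx] at h1
    linarith
  have hGdet : IsUnit G.det := (Matrix.isUnit_iff_isUnit_det G).mp hGunit
  -- the feedback matrices
  set E := fromRows (1 : Matrix (Fin n) (Fin n) ℝ) F with hE
  have hEt : Eᵀ = fromCols (1 : Matrix (Fin n) (Fin n) ℝ) Fᵀ := by
    rw [hE, transpose_fromRows, transpose_one]
  have hFt : Fᵀ = G⁻¹ * X := by
    rw [hF, transpose_mul, transpose_nonsing_inv, transpose_transpose, transpose_transpose]
  have hCE : C = G * Eᵀ := by
    rw [hEt, mul_fromCols, Matrix.mul_one, hFt, ← Matrix.mul_assoc,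
      Matrix.mul_nonsing_inv G hGdet, Matrix.one_mul, hCdef]
  have hCt : Cᵀ = E * Gᵀ := by rw [hCE, transpose_mul, transpose_transpose]
  have hAF : Matrix.fromBlocks A B (F * A) (F * B) = E * T := by
    rw [hE, hT, fromRows_mul_fromCols, Matrix.one_mul, Matrix.one_mul]
  have hABF : A + B * F = T * E := by
    rw [hT, hE, fromCols_mul_fromRows, Matrix.mul_one]
  clear_value F T Q C E
  -- the Lyapunov inequality
  have hJinj : ∀ v : (Fin n ⊕ Fin m) → ℝ,
      (fromRows (1 : Matrix (Fin n ⊕ Fin m) (Fin n ⊕ Fin m) ℝ) Eᵀ) *ᵥ v = 0 → v = 0 := by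
    intro v hv
    rw [fromRows_mulVec] at hv
    have h1 : (1 : Matrix (Fin n ⊕ Fin m) (Fin n ⊕ Fin m) ℝ) *ᵥ v = 0 :=
      funext fun i => congrFun hv (Sum.inl i)
    rwa [one_mulVec] at h1
  have hcong := posDef_conj_of_inj hLMI _ hJinj
  have hIdent : (fromRows (1 : Matrix (Fin n ⊕ Fin m) (Fin n ⊕ Fin m) ℝ) Eᵀ)ᵀ *
      (Matrix.fromBlocks Q (-Cᵀ) (-C) (G + Gᵀ - Hᵀ * P * H)) *
      (fromRows (1 : Matrix (Fin n ⊕ Fin m) (Fin n ⊕ Fin m) ℝ) Eᵀ)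
      = Q - (E * T) * Q * (E * T)ᵀ := by
    rw [transpose_fromRows, transpose_one, transpose_transpose, Matrix.mul_assoc,
      fromBlocks_mul_fromRows, fromCols_mul_fromRows, hW, hCt, hCE]
    rw [transpose_mul]
    simp only [Matrix.mul_one, Matrix.one_mul, Matrix.neg_mul, Matrix.mul_neg,
      Matrix.sub_mul, Matrix.add_mul, Matrix.mul_sub, Matrix.mul_add, Matrix.mul_assoc]
    abel
  rw [hIdent] at hcong
  -- spectral radius bound
  have hLyapC := posDef_map_complex hcong
  have hmapEq : (Q - E * T * Q * (E * T)ᵀ).map Complex.ofReal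
      = Q.map Complex.ofReal - ((E * T).map Complex.ofReal) * (Q.map Complex.ofReal) *
          ((E * T).map Complex.ofReal)ᴴ := by
    rw [conjTranspose_map_ofReal, mapOfReal_sub, mapOfReal_mul, mapOfReal_mul]
  rw [hmapEq] at hLyapC
  have habs : ∀ z ∈ spectrum ℂ ((A + B * F).map Complex.ofReal), ‖z‖ < 1 := by
    intro z hz
    by_cases hz0 : z = 0
    · simp [hz0]
    -- transfer the eigenvalue to E * T
    rw [hABF] at hz
    have hTEmap : (T * E).map Complex.ofReal
        = (T.map Complex.ofReal) * (E.map Complex.ofReal) := mapOfReal_mul T E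
    have hETmap : (E * T).map Complex.ofReal
        = (E.map Complex.ofReal) * (T.map Complex.ofReal) := mapOfReal_mul E T
    set Tc := T.map Complex.ofReal
    set Ec := E.map Complex.ofReal
    rw [hTEmap] at hz
    obtain ⟨u, hu0, hu⟩ := mem_spectrum_iff_exists_mulVec.mp hz
    have hw0 : Ec *ᵥ u ≠ 0 := by
      intro h0
      apply hu0
      rw [← Matrix.mulVec_mulVec, h0, mulVec_zero] at hu
      have := hu.symm
      rwa [smul_eq_zero, or_iff_right hz0] at this
    have hwev : (Ec * Tc) *ᵥ (Ec *ᵥ u) = z • (Ec *ᵥ u) := by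
      rw [← Matrix.mulVec_mulVec, Matrix.mulVec_mulVec u Tc Ec, hu, mulVec_smul]
    have hzspec : z ∈ spectrum ℂ (Ec * Tc) :=
      mem_spectrum_iff_exists_mulVec.mpr ⟨Ec *ᵥ u, hw0, hwev⟩
    have hzconj := conj_mem_spectrum_conjTranspose hzspec
    obtain ⟨v, hv0, hv⟩ := mem_spectrum_iff_exists_mulVec.mp hzconj
    -- apply the complex Lyapunov inequality
    rw [← hETmap] at hv
    have hpos := hLyapC.dotProduct_mulVec_pos hv0
    have hqpos := (posDef_map_complex hQpos).dotProduct_mulVec_pos hv0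
    set Qc := Q.map Complex.ofReal
    set Nc := (E * T).map Complex.ofReal
    have hcompute : star v ⬝ᵥ ((Qc - Nc * Qc * Ncᴴ) *ᵥ v)
        = (1 - (Complex.normSq z : ℂ)) * (star v ⬝ᵥ (Qc *ᵥ v)) := by
      rw [sub_mulVec, dotProduct_sub]
      have h2 : (Nc * Qc * Ncᴴ) *ᵥ v = Nc *ᵥ (Qc *ᵥ (Ncᴴ *ᵥ v)) := by
        rw [Matrix.mulVec_mulVec, Matrix.mulVec_mulVec]
      rw [h2, hv, mulVec_smul]
      have h3 : star v ⬝ᵥ (Nc *ᵥ ((starRingEnd ℂ) z • (Qc *ᵥ v)))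
          = (star (Ncᴴ *ᵥ v)) ⬝ᵥ ((starRingEnd ℂ) z • (Qc *ᵥ v)) := by
        rw [star_mulVec, conjTranspose_conjTranspose, dotProduct_mulVec]
      rw [h3, hv]
      simp only [star_smul, smul_dotProduct, dotProduct_smul, smul_eq_mul,
        Complex.star_def, Complex.conj_conj]
      linear_combination (-(star v ⬝ᵥ (Qc *ᵥ v))) * Complex.mul_conj z
    rw [hcompute] at hpos
    rw [Complex.lt_def] at hpos hqpos
    simp only [Complex.zero_re, Complex.zero_im] at hpos hqpos
    obtain ⟨hre, him⟩ := hpos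
    obtain ⟨hqre, hqim⟩ := hqpos
    have hreval : ((1 - (Complex.normSq z : ℂ)) * (star v ⬝ᵥ (Qc *ᵥ v))).re
        = (1 - Complex.normSq z) * (star v ⬝ᵥ (Qc *ᵥ v)).re := by
      rw [Complex.mul_re]
      simp [← hqim]
    rw [hreval] at hre
    have hn1 : Complex.normSq z < 1 := by nlinarith
    have habs2 : ‖z‖ ^ 2 < 1 := by rwa [Complex.sq_norm]
    nlinarith [norm_nonneg z]
  refine ⟨hQpos, hGunit, ?_, ?_⟩
  · rw [specRad]
    by_cases hne : ((fun z : ℂ => ‖z‖) '' spectrum ℂ ((A + B * F).map Complex.ofReal)) = ∅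
    · rw [hne, Real.sSup_empty]; norm_num
    · have hnonempty := Set.nonempty_iff_ne_empty.mpr hne
      have hfin : ((fun z : ℂ => ‖z‖) ''
          spectrum ℂ ((A + B * F).map Complex.ofReal)).Finite :=
        (Matrix.finite_spectrum _).image _
      have hmem := hnonempty.csSup_mem hfin
      obtain ⟨z, hz, hzeq⟩ := hmem
      rw [← hzeq]
      exact habs z hz
  · rw [hAF]
    exact hcong
end

section
/- Let A ∈ ℝ^{n×n} and B ∈ ℝ^{n×m} be such that the controllability matrix [B, A·B, …, A^{n−1}·B] ∈ ℝ^{n×nm} has rank n, and let U ∈ ℝ^{m×m} be symmetric positive definite. Then the matrix Σ_{j=0}^{n−1} A^j·B·U·Bᵀ·(Aᵀ)^j ∈ ℝ^{n×n} is positive definite. -/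
open Matrix

/-- If `(A, B)` is controllable (the controllability matrix has rank `n`) and `U ≻ 0`,
then `Σ_{j=0}^{n−1} A^j·B·U·Bᵀ·(Aᵀ)^j` is positive definite. -/
theorem controllability_gramian_posDef {n m : ℕ}
    (A : Matrix (Fin n) (Fin n) ℝ) (B : Matrix (Fin n) (Fin m) ℝ)
    (hctrb : (Matrix.of fun (i : Fin n) (p : Fin n × Fin m) =>
        (A ^ (p.1 : ℕ) * B) i p.2).rank = n)
    (U : Matrix (Fin m) (Fin m) ℝ) (hU : U.PosDef) :
    (∑ j ∈ Finset.range n, A ^ j * B * U * Bᵀ * (Aᵀ) ^ j).PosDef := by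
  set C := (Matrix.of fun (i : Fin n) (p : Fin n × Fin m) =>
      (A ^ (p.1 : ℕ) * B) i p.2) with hC
  -- surjectivity of mulVec C from rank
  have hsurj : Function.Surjective C.mulVecLin := by
    rw [← LinearMap.range_eq_top]
    apply Submodule.eq_top_of_finrank_eq
    rw [← Matrix.rank, hctrb, Module.finrank_pi]
    simp
  -- each term rewritten
  have hterm : ∀ j, A ^ j * B * U * Bᵀ * (Aᵀ) ^ j
      = (A ^ j * B) * U * ((A ^ j * B))ᵀ := by
    intro j
    simp only [transpose_mul, transpose_pow, Matrix.mul_assoc]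
  have hps : ∀ j, (A ^ j * B * U * Bᵀ * (Aᵀ) ^ j).PosSemidef := by
    intro j
    rw [hterm j]
    have := hU.posSemidef.mul_mul_conjTranspose_same (A ^ j * B)
    simpa using this
  rw [posDef_iff_dotProduct_mulVec]
  constructor
  · show _ = _
    rw [conjTranspose_sum]
    exact Finset.sum_congr rfl fun j _ => (hps j).1
  · intro x hx
    have hdot : ∀ j, x ⬝ᵥ (A ^ j * B * U * Bᵀ * (Aᵀ) ^ j) *ᵥ (fun i => x i)
        = ((A ^ j * B)ᵀ *ᵥ x) ⬝ᵥ U *ᵥ ((A ^ j * B)ᵀ *ᵥ x) := by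
      intro j
      rw [hterm j]
      rw [show (fun i => x i) = x from rfl]
      rw [← mulVec_mulVec, ← mulVec_mulVec, dotProduct_mulVec, ← mulVec_transpose]
    have hkey : ∃ j ∈ Finset.range n, (A ^ j * B)ᵀ *ᵥ x ≠ 0 := by
      by_contra h
      push_neg at h
      have hvm : ∀ y, x ⬝ᵥ C *ᵥ y = 0 := by
        intro y
        have hxC : x ᵥ* C = 0 := by
          funext p
          have := h p.1 (Finset.mem_range.mpr p.1.isLt)
          have h2 := congrFun this p.2
          simp only [mulVec, vecMul, dotProduct, transpose_apply, Pi.zero_apply] at h2 ⊢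
          simpa [hC, mul_comm] using h2
        rw [dotProduct_mulVec, hxC, zero_dotProduct]
      obtain ⟨y, hy⟩ := hsurj x
      have := hvm y
      rw [show C.mulVecLin y = C *ᵥ y from rfl] at hy
      rw [hy] at this
      exact hx (dotProduct_self_eq_zero.mp this)
    obtain ⟨j, hjmem, hjne⟩ := hkey
    have hpos : 0 < x ⬝ᵥ (A ^ j * B * U * Bᵀ * (Aᵀ) ^ j) *ᵥ (fun i => x i) := by
      rw [hdot j]
      have := hU.dotProduct_mulVec_pos hjne
      simpa using this
    have hnn : ∀ k ∈ Finset.range n, 0 ≤ x ⬝ᵥ (A ^ k * B * U * Bᵀ * (Aᵀ) ^ k) *ᵥ (fun i => x i) := by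
      intro k _
      rw [hdot k]
      have := hU.posSemidef.dotProduct_mulVec_nonneg ((A ^ k * B)ᵀ *ᵥ x)
      simpa using this
    calc (0:ℝ) < x ⬝ᵥ (A ^ j * B * U * Bᵀ * (Aᵀ) ^ j) *ᵥ (fun i => x i) := hpos
      _ ≤ ∑ k ∈ Finset.range n, x ⬝ᵥ (A ^ k * B * U * Bᵀ * (Aᵀ) ^ k) *ᵥ (fun i => x i) :=
          Finset.single_le_sum hnn hjmem
      _ = _ := by
          have hs : (∑ k ∈ Finset.range n, A ^ k * B * U * Bᵀ * (Aᵀ) ^ k) *ᵥ (fun i => x i)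
              = ∑ k ∈ Finset.range n, (A ^ k * B * U * Bᵀ * (Aᵀ) ^ k) *ᵥ (fun i => x i) := by
            funext i
            simp only [Matrix.mulVec, dotProduct, Matrix.sum_apply, Finset.sum_mul,
              Finset.sum_apply]
            rw [Finset.sum_comm]
          rw [hs]
          simp only [dotProduct, star_trivial, Finset.sum_apply, Finset.mul_sum]
          rw [Finset.sum_comm]
end

section
/- Let w, y ∈ ℝ^n, u ∈ ℝ^m, and ε > 0, and set x := w + y. Then, in the Loewner order on ℝ^{(n+m)×(n+m)}, [[x·xᵀ, x·uᵀ], [u·xᵀ, u·uᵀ]] ⪰ [[w·wᵀ − (2/ε)·‖w‖²·I + (1−ε)·y·yᵀ, y·uᵀ], [u·yᵀ, (1−ε)·u·uᵀ]], where ‖w‖ denotes the Euclidean norm of w and I is the n×n identity matrix. -/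
open Matrix

private lemma vecMulVec_mulVec' {ι : Type*} [Fintype ι] (v x : ι → ℝ) :
    Matrix.vecMulVec v v *ᵥ x = (v ⬝ᵥ x) • v := by
  ext i
  simp [Matrix.mulVec, Matrix.vecMulVec_apply, dotProduct, Finset.mul_sum, mul_assoc,
    mul_comm, mul_left_comm]

private lemma psd_smul_vecMulVec {ι : Type*} [Fintype ι] {c : ℝ} (hc : 0 ≤ c) (v : ι → ℝ) :
    (c • Matrix.vecMulVec v v).PosSemidef := by
  refine Matrix.posSemidef_iff_dotProduct_mulVec.mpr ⟨?_, ?_⟩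
  · ext i j
    simp [Matrix.conjTranspose_apply, Matrix.vecMulVec_apply, mul_comm]
  · intro x
    simp only [Matrix.smul_mulVec, vecMulVec_mulVec', dotProduct_smul,
      smul_eq_mul, star_trivial]
    have h : x ⬝ᵥ v = v ⬝ᵥ x := dotProduct_comm x v
    rw [h]
    exact mul_nonneg hc (mul_self_nonneg _)

private lemma psd_gram_block {n m : ℕ} {c : ℝ} (hc : 0 ≤ c) (w : Fin n → ℝ) :
    (c • Matrix.fromBlocks
        ((∑ i, w i ^ 2) • (1 : Matrix (Fin n) (Fin n) ℝ) - Matrix.vecMulVec w w)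
        0 0 (0 : Matrix (Fin m) (Fin m) ℝ)).PosSemidef := by
  refine Matrix.posSemidef_iff_dotProduct_mulVec.mpr ⟨?_, ?_⟩
  · ext i j
    rcases i with i | i <;> rcases j with j | j <;>
      simp [Matrix.conjTranspose_apply, Matrix.vecMulVec_apply, Matrix.one_apply, mul_comm,
        Matrix.fromBlocks, mul_sub, eq_comm]
  · intro x
    set a : Fin n → ℝ := fun i => x (Sum.inl i) with ha
    have key : x ⬝ᵥ (c • Matrix.fromBlocks
        ((∑ i, w i ^ 2) • (1 : Matrix (Fin n) (Fin n) ℝ) - Matrix.vecMulVec w w)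
        0 0 (0 : Matrix (Fin m) (Fin m) ℝ)) *ᵥ x
        = c * ((∑ i, w i ^ 2) * (∑ i, a i ^ 2) - (∑ i, w i * a i) ^ 2) := by
      simp only [Matrix.smul_mulVec, dotProduct_smul, smul_eq_mul]
      congr 1
      simp only [dotProduct, Matrix.mulVec, Fintype.sum_sum_type,
        Matrix.fromBlocks_apply₁₁, Matrix.fromBlocks_apply₁₂, Matrix.fromBlocks_apply₂₁,
        Matrix.fromBlocks_apply₂₂, Matrix.sub_apply, Matrix.smul_apply, Matrix.one_apply,
        Matrix.vecMulVec_apply, Matrix.zero_apply, smul_eq_mul, mul_ite, mul_one, mul_zero,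
        zero_mul, Finset.sum_const_zero, add_zero]
      set S := ∑ i, w i ^ 2 with hS
      set T := ∑ i, w i * a i with hT
      have inner : ∀ i, (∑ j, ((if i = j then S else 0) - w i * w j) * a j)
          = S * a i - w i * T := by
        intro i
        simp_rw [sub_mul]
        rw [Finset.sum_sub_distrib]
        congr 1
        · simp [ite_mul, Finset.sum_ite_eq]
        · rw [hT, Finset.mul_sum]
          exact Finset.sum_congr rfl fun j _ => by ring
      calc ∑ i, a i * ∑ j, ((if i = j then S else 0) - w i * w j) * a j
          = ∑ i, (S * a i ^ 2 - a i * (w i * T)) := by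
            refine Finset.sum_congr rfl fun i _ => ?_
            rw [inner i]; ring
        _ = S * (∑ i, a i ^ 2) - T ^ 2 := by
            rw [Finset.sum_sub_distrib, Finset.mul_sum]
            congr 1
            rw [pow_two, Finset.sum_mul]
            exact Finset.sum_congr rfl fun i _ => by ring
    rw [star_trivial, key]
    have hcs : (∑ i, w i * a i) ^ 2 ≤ (∑ i, w i ^ 2) * ∑ i, a i ^ 2 :=
      Finset.sum_mul_sq_le_sq_mul_sq Finset.univ w a
    have := sub_nonneg.mpr hcs
    positivity

/-- A Loewner lower bound on the outer-product block matrix of `(x, u)` with `x = w + y`: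
`[[x·xᵀ, x·uᵀ], [u·xᵀ, u·uᵀ]] ⪰
 [[w·wᵀ − (2/ε)·‖w‖²·I + (1−ε)·y·yᵀ, y·uᵀ], [u·yᵀ, (1−ε)·u·uᵀ]]`,
where `‖w‖² = Σ i, (w i)²` is the squared Euclidean norm. -/
theorem outer_product_block_lower_bound {n m : ℕ}
    (w y : Fin n → ℝ) (u : Fin m → ℝ) (ε : ℝ) (hε : 0 < ε) :
    (Matrix.fromBlocks
        (Matrix.vecMulVec (w + y) (w + y)) (Matrix.vecMulVec (w + y) u)
        (Matrix.vecMulVec u (w + y)) (Matrix.vecMulVec u u) -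
      Matrix.fromBlocks
        (Matrix.vecMulVec w w - ((2 / ε) * ∑ i, w i ^ 2) • (1 : Matrix (Fin n) (Fin n) ℝ) +
          (1 - ε) • Matrix.vecMulVec y y) (Matrix.vecMulVec y u)
        (Matrix.vecMulVec u y) ((1 - ε) • Matrix.vecMulVec u u)).PosSemidef := by
  have hε' : ε ≠ 0 := ne_of_gt hε
  set v1 : Fin n ⊕ Fin m → ℝ := Sum.elim (w + ε • y) 0 with hv1
  set v2 : Fin n ⊕ Fin m → ℝ := Sum.elim w (ε • u) with hv2
  have hid : (Matrix.fromBlocks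
        (Matrix.vecMulVec (w + y) (w + y)) (Matrix.vecMulVec (w + y) u)
        (Matrix.vecMulVec u (w + y)) (Matrix.vecMulVec u u) -
      Matrix.fromBlocks
        (Matrix.vecMulVec w w - ((2 / ε) * ∑ i, w i ^ 2) • (1 : Matrix (Fin n) (Fin n) ℝ) +
          (1 - ε) • Matrix.vecMulVec y y) (Matrix.vecMulVec y u)
        (Matrix.vecMulVec u y) ((1 - ε) • Matrix.vecMulVec u u))
      = ε⁻¹ • Matrix.vecMulVec v1 v1 + ε⁻¹ • Matrix.vecMulVec v2 v2 +
        (2 / ε) • Matrix.fromBlocks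
          ((∑ i, w i ^ 2) • (1 : Matrix (Fin n) (Fin n) ℝ) - Matrix.vecMulVec w w)
          0 0 (0 : Matrix (Fin m) (Fin m) ℝ) := by
    ext i j
    rcases i with i | i <;> rcases j with j | j <;>
      · simp only [hv1, hv2, Matrix.sub_apply, Matrix.add_apply, Matrix.smul_apply,
          Matrix.fromBlocks_apply₁₁, Matrix.fromBlocks_apply₁₂, Matrix.fromBlocks_apply₂₁,
          Matrix.fromBlocks_apply₂₂, Matrix.vecMulVec_apply, Matrix.one_apply,
          Matrix.zero_apply, Sum.elim_inl, Sum.elim_inr, Pi.add_apply, Pi.smul_apply,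
          Pi.zero_apply, smul_eq_mul]
        (try split_ifs) <;> field_simp <;> (try ring)
  rw [hid]
  exact ((psd_smul_vecMulVec (by positivity) v1).add
      (psd_smul_vecMulVec (by positivity) v2)).add (psd_gram_block (by positivity) w)
end
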